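/- The function C_H(s,t) = (s^{2H} + t^{2H} − |s−t|^{2H})/2 on [0,∞)^2 is positive semidefinite for every H ∈ (0,1]. -/

import Mathlib

open MeasureTheory Real Set

noncomputable def fbmK (α x : ℝ) (u : ℝ) : ℝ := (1 - Real.cos (x * u)) * u ^ (-1 - α)

lemma fbmK_meas (α x : ℝ) : Measurable (fbmK α x) := by
  unfold fbmK
  fun_prop

lemma fbmK_integrable {α : ℝ} (hα : 0 < α) (hα2 : α < 2) (x : ℝ) :
    IntegrableOn (fbmK α x) (Ioi 0) := by
  have hmeas : AEStronglyMeasurable (fbmK α x) (volume.restrict (Ioi (0:ℝ))) :=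
    (fbmK_meas α x).aestronglyMeasurable
  rw [← Ioc_union_Ioi_eq_Ioi (zero_le_one (α := ℝ))]
  apply IntegrableOn.union
  · -- on Ioc 0 1, dominate by (x^2/2) * u^(1-α)
    have hg : IntegrableOn (fun u : ℝ => x ^ 2 / 2 * u ^ (1 - α)) (Ioc 0 1) := by
      apply Integrable.const_mul
      simpa [intervalIntegrable_iff, IntegrableOn] using
        (intervalIntegral.intervalIntegrable_rpow' (a := 0) (b := 1)
          (r := 1 - α) (by linarith))
    apply Integrable.mono' hg (hmeas.mono_set (Ioc_subset_Ioi_self.trans (by simp)))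
    · filter_upwards [ae_restrict_mem measurableSet_Ioc] with u hu
      have hu0 : 0 < u := hu.1
      have h1 : 1 - Real.cos (x * u) ≤ (x * u) ^ 2 / 2 := by
        have := Real.one_sub_sq_div_two_le_cos (x := x * u)
        linarith
      have h0 : 0 ≤ 1 - Real.cos (x * u) := by
        have := Real.cos_le_one (x * u); linarith
      have hp : (0:ℝ) ≤ u ^ (-1 - α) := rpow_nonneg hu0.le _
      simp only [fbmK]
      rw [Real.norm_eq_abs, abs_mul, abs_of_nonneg h0, abs_of_nonneg hp]
      calc (1 - Real.cos (x * u)) * u ^ (-1 - α)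
          ≤ (x * u) ^ 2 / 2 * u ^ (-1 - α) := by
            apply mul_le_mul_of_nonneg_right h1 hp
        _ = x ^ 2 / 2 * u ^ (1 - α) := by
            have : (u:ℝ) ^ (2:ℕ) * u ^ (-1 - α) = u ^ (1 - α) := by
              rw [← Real.rpow_natCast u 2, ← Real.rpow_add hu0]
              norm_num
              ring_nf
            rw [mul_pow]
            calc x ^ 2 * u ^ 2 / 2 * u ^ (-1 - α)
                = x ^ 2 / 2 * (u ^ (2:ℕ) * u ^ (-1 - α)) := by ring
              _ = x ^ 2 / 2 * u ^ (1 - α) := by rw [this]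
  · -- on Ioi 1, dominate by 2 * u ^ (-1-α)
    have hg : IntegrableOn (fun u : ℝ => 2 * u ^ (-1 - α)) (Ioi 1) :=
      (integrableOn_Ioi_rpow_of_lt (by linarith) one_pos).const_mul 2
    apply Integrable.mono' hg (hmeas.mono_set (Ioi_subset_Ioi zero_le_one))
    · filter_upwards [ae_restrict_mem measurableSet_Ioi] with u hu
      have hu0 : (0:ℝ) < u := lt_trans one_pos hu
      have h1 : 1 - Real.cos (x * u) ≤ 2 := by
        have := Real.neg_one_le_cos (x * u); linarith
      have h0 : 0 ≤ 1 - Real.cos (x * u) := by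
        have := Real.cos_le_one (x * u); linarith
      have hp : (0:ℝ) ≤ u ^ (-1 - α) := rpow_nonneg hu0.le _
      simp only [fbmK]
      rw [Real.norm_eq_abs, abs_mul, abs_of_nonneg h0, abs_of_nonneg hp]
      exact mul_le_mul_of_nonneg_right h1 hp

lemma fbmK_scale_pos {α : ℝ} {x : ℝ} (hx : 0 < x) :
    ∫ u in Ioi (0:ℝ), fbmK α x u = x ^ α * ∫ u in Ioi (0:ℝ), fbmK α 1 u := by
  have h1 : ∫ u in Ioi (0:ℝ), fbmK α 1 (x * u)
      = x⁻¹ • ∫ u in Ioi (x * 0), fbmK α 1 u :=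
    integral_comp_mul_left_Ioi (fbmK α 1) 0 hx
  rw [mul_zero] at h1
  have h2 : ∀ u ∈ Ioi (0:ℝ), fbmK α x u = x ^ (1 + α) * fbmK α 1 (x * u) := by
    intro u hu
    have hu0 : (0:ℝ) < u := hu
    simp only [fbmK, one_mul]
    rw [Real.mul_rpow hx.le hu0.le]
    rw [show x ^ (1 + α) * ((1 - Real.cos (x * u)) * (x ^ (-1 - α) * u ^ (-1 - α)))
        = (1 - Real.cos (x * u)) * ((x ^ (1 + α) * x ^ (-1 - α)) * u ^ (-1 - α)) by ring]
    rw [← Real.rpow_add hx]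
    norm_num
  rw [setIntegral_congr_fun measurableSet_Ioi h2, integral_const_mul, h1, smul_eq_mul]
  rw [show x⁻¹ = x ^ (-1:ℝ) by rw [Real.rpow_neg_one]]
  rw [← mul_assoc, ← Real.rpow_add hx]
  ring_nf

lemma fbmK_scale {α : ℝ} (hα : 0 < α) (x : ℝ) :
    ∫ u in Ioi (0:ℝ), fbmK α x u = |x| ^ α * ∫ u in Ioi (0:ℝ), fbmK α 1 u := by
  rcases lt_trichotomy x 0 with hx | hx | hx
  · have : fbmK α x = fbmK α (-x) := by
      funext u; simp [fbmK, neg_mul, Real.cos_neg]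
    rw [this, fbmK_scale_pos (by linarith : (0:ℝ) < -x), abs_of_neg hx]
  · subst hx
    simp [fbmK, Real.zero_rpow hα.ne']
  · rw [fbmK_scale_pos hx, abs_of_pos hx]

lemma fbmK_pos_integral {α : ℝ} (hα : 0 < α) (hα2 : α < 2) :
    0 < ∫ u in Ioi (0:ℝ), fbmK α 1 u := by
  set c : ℝ := (1 - Real.cos 1) * (3:ℝ) ^ (-1 - α) with hc_def
  have hcos1 : Real.cos 1 < 1 := by
    have h01 : (0:ℝ) ∈ Icc 0 π := ⟨le_refl _, Real.pi_pos.le⟩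
    have h11 : (1:ℝ) ∈ Icc 0 π := ⟨zero_le_one, by linarith [Real.pi_gt_three]⟩
    have := Real.strictAntiOn_cos h01 h11 one_pos
    simpa using this
  have hc : 0 < c := mul_pos (by linarith) (Real.rpow_pos_of_pos (by norm_num) _)
  have hint : IntegrableOn (fbmK α 1) (Ioi 0) := fbmK_integrable hα hα2 1
  have hnonneg : ∀ u ∈ Ioi (0:ℝ), 0 ≤ fbmK α 1 u := by
    intro u hu
    have := Real.cos_le_one (1 * u)
    exact mul_nonneg (by linarith) (rpow_nonneg (le_of_lt hu) _)
  have hsub : Ioc (1:ℝ) 3 ⊆ Ioi 0 := fun u hu => lt_trans one_pos hu.1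
  have h1 : ∫ _ in Ioc (1:ℝ) 3, c ≤ ∫ u in Ioc (1:ℝ) 3, fbmK α 1 u := by
    apply setIntegral_mono_on (integrableOn_const (hs := by simp))
      (hint.mono_set hsub) measurableSet_Ioc
    intro u hu
    have hu1 : (1:ℝ) ≤ u := hu.1.le
    have hu3 : u ≤ 3 := hu.2
    have hcu : Real.cos u ≤ Real.cos 1 :=
      Real.cos_le_cos_of_nonneg_of_le_pi zero_le_one
        (by linarith [Real.pi_gt_three]) hu1
    have hru : (3:ℝ) ^ (-1 - α) ≤ u ^ (-1 - α) :=
      Real.rpow_le_rpow_of_nonpos (by linarith) hu3 (by linarith)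
    simp only [fbmK, one_mul]
    calc c ≤ (1 - Real.cos u) * (3:ℝ) ^ (-1 - α) := by
            apply mul_le_mul_of_nonneg_right (by linarith)
              (rpow_nonneg (by norm_num) _)
      _ ≤ (1 - Real.cos u) * u ^ (-1 - α) := by
            apply mul_le_mul_of_nonneg_left hru (by linarith)
  have h2 : ∫ u in Ioc (1:ℝ) 3, fbmK α 1 u ≤ ∫ u in Ioi (0:ℝ), fbmK α 1 u := by
    apply setIntegral_mono_set hint
    · exact (ae_restrict_iff' measurableSet_Ioi).2 (.of_forall hnonneg)
    · exact HasSubset.Subset.eventuallyLE hsub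
  have h3 : (0:ℝ) < ∫ _ in Ioc (1:ℝ) 3, c := by
    rw [setIntegral_const]
    simp [Real.volume_Ioc]
    positivity
  linarith

lemma fbm_cross {α : ℝ} (hα : 0 < α) (hα2 : α < 2) {s t : ℝ} (hs : 0 ≤ s) (ht : 0 ≤ t) :
    (s ^ α + t ^ α - |s - t| ^ α) * (∫ u in Ioi (0:ℝ), fbmK α 1 u)
      = ∫ u in Ioi (0:ℝ), (fbmK α s u + fbmK α t u - fbmK α (s - t) u) := by
  have hadd : IntegrableOn (fun u => fbmK α s u + fbmK α t u) (Ioi 0) :=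
    (fbmK_integrable hα hα2 s).add (fbmK_integrable hα hα2 t)
  rw [integral_sub hadd (fbmK_integrable hα hα2 (s - t)),
    integral_add (fbmK_integrable hα hα2 s) (fbmK_integrable hα hα2 t),
    fbmK_scale hα s, fbmK_scale hα t, fbmK_scale hα (s - t),
    abs_of_nonneg hs, abs_of_nonneg ht]
  ring

theorem fbm_covariance_posSemidef (H : ℝ) (hH : 0 < H ∧ H ≤ 1) (n : ℕ)
    (t : Fin n → ℝ) (ht : ∀ i, 0 ≤ t i) (a : Fin n → ℝ) :
    0 ≤ ∑ i, ∑ j,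
      a i * a j * ((t i ^ (2 * H) + t j ^ (2 * H) - |t i - t j| ^ (2 * H)) / 2) := by
  obtain ⟨hH0, hH1⟩ := hH
  rcases eq_or_lt_of_le hH1 with hH1 | hH1
  · -- H = 1 : the kernel is s*t
    subst hH1
    have hterm : ∀ i j, a i * a j *
        ((t i ^ (2 * (1:ℝ)) + t j ^ (2 * (1:ℝ)) - |t i - t j| ^ (2 * (1:ℝ))) / 2)
        = (a i * t i) * (a j * t j) := by
      intro i j
      have h2 : (2 * (1:ℝ)) = ((2:ℕ) : ℝ) := by norm_num
      rw [h2, Real.rpow_natCast, Real.rpow_natCast, Real.rpow_natCast, sq_abs]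
      ring
    simp only [hterm, ← Finset.mul_sum, ← Finset.sum_mul]
    exact mul_self_nonneg _
  · -- 0 < H < 1 : integral representation
    set α : ℝ := 2 * H with hα_def
    have hα : 0 < α := by positivity
    have hα2 : α < 2 := by simp only [hα_def]; linarith
    set I : ℝ := ∫ u in Ioi (0:ℝ), fbmK α 1 u with hI_def
    have hI : 0 < I := fbmK_pos_integral hα hα2
    set T : ℝ := ∑ i, ∑ j,
      a i * a j * ((t i ^ α + t j ^ α - |t i - t j| ^ α) / 2) with hT_def
    -- key identity : T * (2 * I) equals an integral of a nonnegative function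
    have key : T * (2 * I) = ∫ u in Ioi (0:ℝ),
        ∑ i, ∑ j, a i * a j *
          (fbmK α (t i) u + fbmK α (t j) u - fbmK α (t i - t j) u) := by
      rw [integral_finset_sum]
      · rw [hT_def, Finset.sum_mul]
        apply Finset.sum_congr rfl
        intro i _
        rw [integral_finset_sum]
        · rw [Finset.sum_mul]
          apply Finset.sum_congr rfl
          intro j _
          rw [integral_const_mul, ← fbm_cross hα hα2 (ht i) (ht j)]
          ring
        · intro j _
          exact (((fbmK_integrable hα hα2 (t i)).add
            (fbmK_integrable hα hα2 (t j))).sub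
            (fbmK_integrable hα hα2 (t i - t j))).const_mul _
      · intro i _
        apply integrable_finset_sum
        intro j _
        exact (((fbmK_integrable hα hα2 (t i)).add
          (fbmK_integrable hα hα2 (t j))).sub
          (fbmK_integrable hα hα2 (t i - t j))).const_mul _
    have hnn : 0 ≤ T * (2 * I) := by
      rw [key]
      apply setIntegral_nonneg measurableSet_Ioi
      intro u hu
      have hp : (0:ℝ) ≤ u ^ (-1 - α) := rpow_nonneg (le_of_lt hu) _
      have hpt : ∀ i j : Fin n,
          fbmK α (t i) u + fbmK α (t j) u - fbmK α (t i - t j) u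
          = ((1 - Real.cos (t i * u)) * (1 - Real.cos (t j * u))
            + Real.sin (t i * u) * Real.sin (t j * u)) * u ^ (-1 - α) := by
        intro i j
        simp only [fbmK]
        rw [show (t i - t j) * u = t i * u - t j * u by ring, Real.cos_sub]
        ring
      have : ∑ i, ∑ j, a i * a j *
            (fbmK α (t i) u + fbmK α (t j) u - fbmK α (t i - t j) u)
          = ((∑ i, a i * (1 - Real.cos (t i * u)))^2
            + (∑ i, a i * Real.sin (t i * u))^2) * u ^ (-1 - α) := by
        rw [sq, sq, Finset.sum_mul_sum, Finset.sum_mul_sum, add_mul,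
          Finset.sum_mul, Finset.sum_mul, ← Finset.sum_add_distrib]
        apply Finset.sum_congr rfl
        intro i _
        rw [Finset.sum_mul, Finset.sum_mul, ← Finset.sum_add_distrib]
        apply Finset.sum_congr rfl
        intro j _
        rw [hpt i j]
        ring
      rw [this]
      positivity
    nlinarith
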